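/- Let 0<α<1 and a>0, and let k:[0,a]×[0,a]→ℝ be continuous with k(x,x)=1 for all x. For h = a/N consider the 2×2 matrix S_h with entries (S_h)_{n,j} = (ω_{n−j} + w_{n,j})·k(x_n, x_{j−1/2}) for n, j ∈ {1,2}, where ω_{−1} := 0. Then there exist h₀ > 0 and M > 0 such that for all 0 < h ≤ h₀ the matrix S_h is invertible and the maximum-norm operator norm of S_h^{−1} is at most M. -/

import Mathlib

open Real

/-- Midpoint quadrature weights `ω_m = ((m+1)^α − m^α)/Γ(α+1)`. -/
noncomputable def omegaW (α : ℝ) (m : ℕ) : ℝ :=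
  (((m : ℝ) + 1) ^ α - (m : ℝ) ^ α) / Real.Gamma (α + 1)

/-- Coefficients `τ_m = ((m+1)^{α+1} − m^{α+1})/Γ(α+2) − ((m+1)^α + m^α)/(2Γ(α+1))`. -/
noncomputable def tauW (α : ℝ) (m : ℕ) : ℝ :=
  (((m : ℝ) + 1) ^ (α + 1) - (m : ℝ) ^ (α + 1)) / Real.Gamma (α + 2)
    - (((m : ℝ) + 1) ^ α + (m : ℝ) ^ α) / (2 * Real.Gamma (α + 1))

/-- Correction weights `w_{n,1} = −Σ_{l<n} τ_l`, `w_{n,2} = Σ_{l<n} τ_l`. -/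
noncomputable def corrW (α : ℝ) (n j : ℕ) : ℝ :=
  if j = 1 then -(∑ l ∈ Finset.range n, tauW α l) else ∑ l ∈ Finset.range n, tauW α l

/-- The 2×2 starting matrix `S_h` with entries
`(S_h)_{n,j} = (ω_{n−j} + w_{n,j})·k(x_n, x_{j−1/2})` for `n, j ∈ {1,2}` (`ω_{−1} := 0`);
row index `i` corresponds to `n = i+1`, column index `j` to `j+1`. -/
noncomputable def Smat (α : ℝ) (k : ℝ → ℝ → ℝ) (h : ℝ) : Matrix (Fin 2) (Fin 2) ℝ :=
  fun i j =>
    ((if (j : ℕ) ≤ (i : ℕ) then omegaW α ((i : ℕ) - (j : ℕ)) else 0)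
        + corrW α ((i : ℕ) + 1) ((j : ℕ) + 1))
      * k (((i : ℕ) + 1 : ℝ) * h) (((j : ℕ) + 1 : ℝ) * h - h / 2)

lemma Smat_00 (α : ℝ) (k : ℝ → ℝ → ℝ) (h : ℝ) :
    Smat α k h 0 0 = (omegaW α 0 - tauW α 0) * k (1 * h) (1 * h - h / 2) := by
  simp [Smat, corrW, Finset.sum_range_one]
  ring_nf <;> tauto

lemma Smat_01 (α : ℝ) (k : ℝ → ℝ → ℝ) (h : ℝ) :
    Smat α k h 0 1 = tauW α 0 * k (1 * h) (2 * h - h / 2) := by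
  simp [Smat, corrW, Finset.sum_range_one]
  ring_nf <;> tauto

lemma Smat_10 (α : ℝ) (k : ℝ → ℝ → ℝ) (h : ℝ) :
    Smat α k h 1 0 = (omegaW α 1 - (tauW α 0 + tauW α 1)) * k (2 * h) (1 * h - h / 2) := by
  simp [Smat, corrW, Finset.sum_range_succ, Finset.sum_range_one]
  ring_nf

lemma Smat_11 (α : ℝ) (k : ℝ → ℝ → ℝ) (h : ℝ) :
    Smat α k h 1 1 = (omegaW α 0 + (tauW α 0 + tauW α 1)) * k (2 * h) (2 * h - h / 2) := by
  simp [Smat, corrW, Finset.sum_range_succ, Finset.sum_range_one]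
  ring_nf <;> tauto

lemma det_coeff (α : ℝ) (hα0 : 0 < α) :
    (omegaW α 0 - tauW α 0) * (omegaW α 0 + (tauW α 0 + tauW α 1))
      - tauW α 0 * (omegaW α 1 - (tauW α 0 + tauW α 1))
    = 2 ^ α / ((α + 1) * (Real.Gamma (α + 1)) ^ 2) := by
  have hG : 0 < Real.Gamma (α + 1) := Real.Gamma_pos_of_pos (by linarith)
  have hG2 : Real.Gamma (α + 2) = (α + 1) * Real.Gamma (α + 1) := by
    rw [show α + 2 = (α + 1) + 1 by ring, Real.Gamma_add_one (by linarith)]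
  have h0 : (0 : ℝ) ^ α = 0 := Real.zero_rpow (ne_of_gt hα0)
  have h0' : (0 : ℝ) ^ (α + 1) = 0 := Real.zero_rpow (by linarith)
  have h1 : (1 : ℝ) ^ α = 1 := Real.one_rpow α
  have h1' : (1 : ℝ) ^ (α + 1) = 1 := Real.one_rpow _
  have h2 : (2 : ℝ) ^ (α + 1) = 2 ^ α * 2 := Real.rpow_add_one (by norm_num) α
  simp only [omegaW, tauW, hG2, Nat.cast_zero, Nat.cast_one, zero_add, h0, h0', h1, h1']
  rw [show (1:ℝ) + 1 = 2 by norm_num, h2]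
  have hA1 : α + 1 ≠ 0 := by linarith
  field_simp
  ring

lemma prod_near_one {K K' ε : ℝ} (hε : ε ≤ 1) (h1 : |K - 1| < ε) (h2 : |K' - 1| < ε) :
    |K * K' - 1| ≤ 3 * ε := by
  rw [abs_lt] at h1 h2
  rw [abs_le]
  constructor <;> nlinarith

set_option maxHeartbeats 1600000 in
theorem stmt_10 (α a : ℝ) (hα0 : 0 < α) (hα1 : α < 1) (ha : 0 < a)
    (k : ℝ → ℝ → ℝ)
    (hkc : ContinuousOn (Function.uncurry k) (Set.Icc (0 : ℝ) a ×ˢ Set.Icc (0 : ℝ) a))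
    (hk1 : ∀ x ∈ Set.Icc (0 : ℝ) a, k x x = 1) :
    ∃ h₀ > (0 : ℝ), ∃ M > (0 : ℝ), ∀ h : ℝ, 0 < h → h ≤ h₀ →
      IsUnit (Smat α k h) ∧
      max (|(Smat α k h)⁻¹ 0 0| + |(Smat α k h)⁻¹ 0 1|)
          (|(Smat α k h)⁻¹ 1 0| + |(Smat α k h)⁻¹ 1 1|) ≤ M := by
  have hG : 0 < Real.Gamma (α + 1) := Real.Gamma_pos_of_pos (by linarith)
  set c00 := omegaW α 0 - tauW α 0 with hc00
  set c01 := tauW α 0 with hc01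
  set c10 := omegaW α 1 - (tauW α 0 + tauW α 1) with hc10
  set c11 := omegaW α 0 + (tauW α 0 + tauW α 1) with hc11
  set D := (2 : ℝ) ^ α / ((α + 1) * (Real.Gamma (α + 1)) ^ 2) with hDdef
  have hD : 0 < D := by
    apply div_pos (Real.rpow_pos_of_pos (by norm_num) α)
    positivity
  have hdet0 : c00 * c11 - c01 * c10 = D := det_coeff α hα0
  set Q := |c00 * c11| + |c01 * c10| + 1 with hQdef
  have hQ : 0 < Q := by positivity
  set Cm := |c00| + |c01| + |c10| + |c11| + 1 with hCmdef
  have hCm : 0 < Cm := by positivity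
  set ε := min 1 (D / (6 * Q)) with hεdef
  have hε0 : 0 < ε := lt_min one_pos (by positivity)
  have hε1 : ε ≤ 1 := min_le_left _ _
  have hεQ : 3 * ε * Q ≤ D / 2 := by
    have : ε ≤ D / (6 * Q) := min_le_right _ _
    calc 3 * ε * Q ≤ 3 * (D / (6 * Q)) * Q := by gcongr
    _ = D / 2 := by field_simp; ring
  -- continuity at (0,0)
  have hmem : ((0 : ℝ), (0 : ℝ)) ∈ Set.Icc (0 : ℝ) a ×ˢ Set.Icc (0 : ℝ) a := by
    constructor <;> exact ⟨le_refl _, ha.le⟩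
  have hcw : ContinuousWithinAt (Function.uncurry k)
      (Set.Icc (0 : ℝ) a ×ˢ Set.Icc (0 : ℝ) a) (0, 0) := hkc _ hmem
  rw [Metric.continuousWithinAt_iff] at hcw
  obtain ⟨δ, hδ0, hδ⟩ := hcw ε hε0
  have hk00 : k 0 0 = 1 := hk1 0 ⟨le_refl _, ha.le⟩
  refine ⟨min (δ / 3) (a / 2), lt_min (by linarith) (by linarith), 8 * Cm / D, by positivity,
    fun h hh0 hh1 => ?_⟩
  have hh2a : 2 * h ≤ a := by
    have := le_trans hh1 (min_le_right _ _); linarith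
  have hh2δ : 2 * h < δ := by
    have := le_trans hh1 (min_le_left _ _); linarith
  -- all four kernel values are near 1
  have hnear : ∀ x y : ℝ, 0 ≤ x → x ≤ 2 * h → 0 ≤ y → y ≤ 2 * h → |k x y - 1| < ε := by
    intro x y hx0 hx2 hy0 hy2
    have hmemxy : ((x, y) : ℝ × ℝ) ∈ Set.Icc (0 : ℝ) a ×ˢ Set.Icc (0 : ℝ) a :=
      ⟨⟨hx0, by linarith⟩, ⟨hy0, by linarith⟩⟩
    have hdist : dist ((x, y) : ℝ × ℝ) (0, 0) < δ := by
      rw [Prod.dist_eq]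
      simp only [Real.dist_eq, sub_zero]
      rw [abs_of_nonneg hx0, abs_of_nonneg hy0]
      exact max_lt (by linarith) (by linarith)
    have := hδ hmemxy hdist
    simpa [Function.uncurry, hk00, Real.dist_eq] using this
  set K00 := k (1 * h) (1 * h - h / 2) with hK00
  set K01 := k (1 * h) (2 * h - h / 2) with hK01
  set K10 := k (2 * h) (1 * h - h / 2) with hK10
  set K11 := k (2 * h) (2 * h - h / 2) with hK11
  have hn00 : |K00 - 1| < ε := hnear _ _ (by linarith) (by linarith) (by linarith) (by linarith)
  have hn01 : |K01 - 1| < ε := hnear _ _ (by linarith) (by linarith) (by linarith) (by linarith)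
  have hn10 : |K10 - 1| < ε := hnear _ _ (by linarith) (by linarith) (by linarith) (by linarith)
  have hn11 : |K11 - 1| < ε := hnear _ _ (by linarith) (by linarith) (by linarith) (by linarith)
  set A := Smat α k h with hA
  have e00 : A 0 0 = c00 * K00 := Smat_00 α k h
  have e01 : A 0 1 = c01 * K01 := Smat_01 α k h
  have e10 : A 1 0 = c10 * K10 := Smat_10 α k h
  have e11 : A 1 1 = c11 * K11 := Smat_11 α k h
  have hdet : A.det = c00 * K00 * (c11 * K11) - c01 * K01 * (c10 * K10) := by
    rw [Matrix.det_fin_two, e00, e01, e10, e11]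
  have hdiff : |A.det - D| ≤ D / 2 := by
    have h1 : |K00 * K11 - 1| ≤ 3 * ε := prod_near_one hε1 hn00 hn11
    have h2 : |K01 * K10 - 1| ≤ 3 * ε := prod_near_one hε1 hn01 hn10
    have key : A.det - D = c00 * c11 * (K00 * K11 - 1) - c01 * c10 * (K01 * K10 - 1) := by
      rw [hdet, ← hdet0]; ring
    have b1 : |c00 * c11 * (K00 * K11 - 1)| ≤ |c00 * c11| * (3 * ε) := by
      rw [abs_mul]
      exact mul_le_mul_of_nonneg_left h1 (abs_nonneg _)
    have b2 : |c01 * c10 * (K01 * K10 - 1)| ≤ |c01 * c10| * (3 * ε) := by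
      rw [abs_mul]
      exact mul_le_mul_of_nonneg_left h2 (abs_nonneg _)
    calc |A.det - D| ≤ |c00 * c11 * (K00 * K11 - 1)| + |c01 * c10 * (K01 * K10 - 1)| := by
          rw [key]; exact abs_sub _ _
    _ ≤ |c00 * c11| * (3 * ε) + |c01 * c10| * (3 * ε) := add_le_add b1 b2
    _ = 3 * ε * (|c00 * c11| + |c01 * c10|) := by ring
    _ ≤ 3 * ε * Q := by
        have hle : |c00 * c11| + |c01 * c10| ≤ Q := by rw [hQdef]; linarith
        exact mul_le_mul_of_nonneg_left hle (by linarith)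
    _ ≤ D / 2 := hεQ
  have hdetlb : D / 2 ≤ A.det := by
    have := abs_le.mp hdiff
    linarith [this.1]
  have hdetpos : 0 < A.det := lt_of_lt_of_le (half_pos hD) hdetlb
  have hdetne : A.det ≠ 0 := ne_of_gt hdetpos
  have hunit : IsUnit A := (Matrix.isUnit_iff_isUnit_det A).mpr (isUnit_iff_ne_zero.mpr hdetne)
  refine ⟨hunit, ?_⟩
  -- bound inverse entries
  have hinv : A⁻¹ = (A.det)⁻¹ • A.adjugate := by
    rw [Matrix.inv_def, Ring.inverse_eq_inv]
  have hadj := Matrix.adjugate_fin_two A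
  have i00 : |A⁻¹ 0 0| = |A.det|⁻¹ * |A 1 1| := by
    rw [hinv, hadj]; simp [Matrix.smul_apply, abs_mul, abs_inv]
  have i01 : |A⁻¹ 0 1| = |A.det|⁻¹ * |A 0 1| := by
    rw [hinv, hadj]; simp [Matrix.smul_apply, abs_mul, abs_inv]
  have i10 : |A⁻¹ 1 0| = |A.det|⁻¹ * |A 1 0| := by
    rw [hinv, hadj]; simp [Matrix.smul_apply, abs_mul, abs_inv]
  have i11 : |A⁻¹ 1 1| = |A.det|⁻¹ * |A 0 0| := by
    rw [hinv, hadj]; simp [Matrix.smul_apply, abs_mul, abs_inv]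
  have habs : ∀ c K : ℝ, |c| ≤ Cm → |K - 1| < ε → |c * K| ≤ 2 * Cm := by
    intro c K hc hK
    rw [abs_mul]
    have hK2 : |K| ≤ 2 := by
      have := abs_lt.mp hK
      rw [abs_le]; constructor <;> linarith
    calc |c| * |K| ≤ Cm * 2 := mul_le_mul hc hK2 (abs_nonneg K) hCm.le
    _ = 2 * Cm := by ring
  have nn0 := abs_nonneg c00; have nn1 := abs_nonneg c01
  have nn2 := abs_nonneg c10; have nn3 := abs_nonneg c11
  have b00 : |A 0 0| ≤ 2 * Cm := by rw [e00]; exact habs _ _ (by rw [hCmdef]; linarith) hn00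
  have b01 : |A 0 1| ≤ 2 * Cm := by rw [e01]; exact habs _ _ (by rw [hCmdef]; linarith) hn01
  have b10 : |A 1 0| ≤ 2 * Cm := by rw [e10]; exact habs _ _ (by rw [hCmdef]; linarith) hn10
  have b11 : |A 1 1| ≤ 2 * Cm := by rw [e11]; exact habs _ _ (by rw [hCmdef]; linarith) hn11
  have hdinv : |A.det|⁻¹ ≤ (D / 2)⁻¹ := by
    rw [abs_of_pos hdetpos]
    exact inv_anti₀ (half_pos hD) hdetlb
  have hdinv0 : (0:ℝ) ≤ |A.det|⁻¹ := by positivity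
  have hfinal : ∀ x y : ℝ, |x| ≤ 2 * Cm → |y| ≤ 2 * Cm →
      |A.det|⁻¹ * |x| + |A.det|⁻¹ * |y| ≤ 8 * Cm / D := by
    intro x y hx hy
    have h1 : |A.det|⁻¹ * |x| + |A.det|⁻¹ * |y| ≤ (D/2)⁻¹ * (2 * Cm) + (D/2)⁻¹ * (2 * Cm) := by
      have := abs_nonneg x; have := abs_nonneg y
      have hD2 : (0:ℝ) ≤ (D/2)⁻¹ := by positivity
      gcongr
    have h2 : (D/2)⁻¹ * (2 * Cm) + (D/2)⁻¹ * (2 * Cm) = 8 * Cm / D := by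
      field_simp
      ring
    linarith
  apply max_le
  · rw [i00, i01]
    exact hfinal _ _ b11 b01
  · rw [i10, i11]
    exact hfinal _ _ b10 b00
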